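/- Suppose Φ = (Φ₁, Φ₂) : 𝒪(−2) ⊗ ℂ² → 𝒪(−1) ⊕ (𝒪 ⊗ ℂᵏ) on ℙ_n is a generic morphism (i.e. the induced linear map f₁ : ℂ² → V* has rank 2) with image plane P = Im(f₁) ⊂ V* cutting out ℙ_{n−2} ⊂ ℙ_n. Then ker(Φ₁) ≅ 𝒪(−3), Im(Φ₁) ≅ ℐ_{ℙ_{n−2}}(−1), and the restriction Φ′ : 𝒪(−3) → 𝒪 ⊗ ℂᵏ of Φ₂ to ker(Φ₁) vanishes on ℙ_{n−2}, hence induces a linear map f′ : (ℂᵏ)* → H⁰(ℐ_{ℙ_{n−2}}(3)). -/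

import Mathlib

open MvPolynomial

variable {σ : Type*}

lemma hcTop_ne_zero {p : MvPolynomial σ ℂ} (hp : p ≠ 0) :
    homogeneousComponent p.totalDegree p ≠ 0 := by
  obtain ⟨d, hd, hsup⟩ := Finset.exists_mem_eq_sup p.support
    (MvPolynomial.support_nonempty.mpr hp) (fun m => m.sum fun _ e => e)
  intro h
  have hcd : coeff d (homogeneousComponent p.totalDegree p) = coeff d p := by
    rw [coeff_homogeneousComponent, if_pos]
    rw [MvPolynomial.totalDegree, hsup]; rfl
  rw [h, coeff_zero] at hcd
  exact (MvPolynomial.mem_support_iff.mp hd) hcd.symm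

lemma hcTop_mul (p q : MvPolynomial σ ℂ) :
    homogeneousComponent (p.totalDegree + q.totalDegree) (p * q) =
      homogeneousComponent p.totalDegree p * homogeneousComponent q.totalDegree q := by
  set dp := p.totalDegree
  set dq := q.totalDegree
  conv_lhs => rw [← sum_homogeneousComponent p, ← sum_homogeneousComponent q,
    Finset.sum_mul_sum]
  rw [map_sum]
  rw [Finset.sum_eq_single dp]
  · rw [map_sum, Finset.sum_eq_single dq]
    · rw [homogeneousComponent_of_mem
        (((homogeneousComponent_isHomogeneous dp p).mul
          (homogeneousComponent_isHomogeneous dq q)) : _ ∈ _), if_pos rfl]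
    · intro j hj hjne
      rw [homogeneousComponent_of_mem
        (((homogeneousComponent_isHomogeneous dp p).mul
          (homogeneousComponent_isHomogeneous j q)) : _ ∈ _), if_neg]
      omega
    · intro h; exact absurd (Finset.self_mem_range_succ dq) h
  · intro i hi hine
    rw [map_sum, Finset.sum_eq_zero]
    intro j hj
    rw [homogeneousComponent_of_mem
      (((homogeneousComponent_isHomogeneous i p).mul
        (homogeneousComponent_isHomogeneous j q)) : _ ∈ _), if_neg]
    simp only [Finset.mem_range] at hi hj
    omega
  · intro h; exact absurd (Finset.self_mem_range_succ dp) h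

lemma totalDegree_add_le_mul {p q : MvPolynomial σ ℂ} (hp : p ≠ 0) (hq : q ≠ 0) :
    p.totalDegree + q.totalDegree ≤ (p * q).totalDegree := by
  by_contra h
  push_neg at h
  have := homogeneousComponent_eq_zero _ (p * q) h
  rw [hcTop_mul] at this
  exact mul_ne_zero (hcTop_ne_zero hp) (hcTop_ne_zero hq) this

lemma eq_C_of_totalDegree_eq_zero {p : MvPolynomial σ ℂ} (h : p.totalDegree = 0) :
    p = C (coeff 0 p) := by
  have hmem : p ∈ homogeneousSubmodule σ ℂ 0 :=
    (mem_homogeneousSubmodule 0 p).mpr (isHomogeneous_of_totalDegree_zero (σ := σ) h)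
  have := homogeneousComponent_of_mem hmem (m := 0)
  rw [if_pos rfl, homogeneousComponent_zero] at this
  exact this.symm

lemma prime_of_homog_one {z : MvPolynomial σ ℂ} (hz : z.IsHomogeneous 1) (hne : z ≠ 0) :
    Prime z := by
  rw [← UniqueFactorizationMonoid.irreducible_iff_prime]
  constructor
  · intro hu
    obtain ⟨w, hw⟩ := isUnit_iff_exists_inv.mp hu
    have hwne : w ≠ 0 := by rintro rfl; simp at hw
    have h1 := totalDegree_add_le_mul hne hwne
    rw [hw, totalDegree_one, hz.totalDegree hne] at h1
    omega
  · intro a b hab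
    have hane : a ≠ 0 := by rintro rfl; simp at hab; exact hne hab
    have hbne : b ≠ 0 := by rintro rfl; simp at hab; exact hne hab
    have h1 := totalDegree_add_le_mul hane hbne
    rw [← hab, hz.totalDegree hne] at h1
    rcases Nat.le_one_iff_eq_zero_or_eq_one.mp (le_of_add_le_left h1) with h0 | _
    · left
      rw [eq_C_of_totalDegree_eq_zero h0]
      refine IsUnit.map C (isUnit_iff_ne_zero.mpr ?_)
      intro hc
      exact hane (by rw [eq_C_of_totalDegree_eq_zero h0, hc, map_zero])
    · right
      have h0 : b.totalDegree = 0 := by omega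
      rw [eq_C_of_totalDegree_eq_zero h0]
      refine IsUnit.map C (isUnit_iff_ne_zero.mpr ?_)
      intro hc
      exact hbne (by rw [eq_C_of_totalDegree_eq_zero h0, hc, map_zero])

/-- Structure of a generic morphism `Φ = (Φ₁, Φ₂) : 𝒪(−2) ⊗ ℂ² → 𝒪(−1) ⊕ (𝒪 ⊗ ℂᵏ)` on
`ℙ_n = ℙ(V)`: if `Φ₁` corresponds to two linearly independent linear forms `z₁, z₂`
(rank-2 case, image plane `P = ⟨z₁, z₂⟩` cutting out `ℙ_{n−2}`) and `Φ₂` is given by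
quadrics `q₁ j, q₂ j`, then:
(1) `ker Φ₁ ≅ 𝒪(−3)`: a pair `(a,b)` satisfies `a z₁ + b z₂ = 0` iff `(a,b) = (c z₂, −c z₁)`;
(2) `Im Φ₁ ≅ ℐ_{ℙ_{n−2}}(−1)`: `g` is of the form `a z₁ + b z₂` iff `g` lies in the ideal
generated by `z₁, z₂`;
(3) the restriction `Φ′` of `Φ₂` to `ker Φ₁` vanishes on `ℙ_{n−2}`, i.e. its components
`z₂·q₁ j − z₁·q₂ j` are cubics lying in the ideal `(z₁, z₂)`; hence `Φ′` induces a linear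
map `f′ : (ℂᵏ)* → H⁰(ℐ_{ℙ_{n−2}}(3))`. -/
theorem stmt17 (n k : ℕ) (hn : 2 ≤ n)
    (z₁ z₂ : MvPolynomial (Fin (n + 1)) ℂ)
    (hz₁ : z₁.IsHomogeneous 1) (hz₂ : z₂.IsHomogeneous 1)
    (hind : LinearIndependent ℂ ![z₁, z₂])
    (q₁ q₂ : Fin k → MvPolynomial (Fin (n + 1)) ℂ)
    (hq₁ : ∀ j, (q₁ j).IsHomogeneous 2) (hq₂ : ∀ j, (q₂ j).IsHomogeneous 2) :
    (∀ a b : MvPolynomial (Fin (n + 1)) ℂ,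
      a * z₁ + b * z₂ = 0 ↔ ∃ c : MvPolynomial (Fin (n + 1)) ℂ, a = c * z₂ ∧ b = -(c * z₁)) ∧
    (∀ g : MvPolynomial (Fin (n + 1)) ℂ,
      (∃ a b : MvPolynomial (Fin (n + 1)) ℂ, g = a * z₁ + b * z₂) ↔
        g ∈ Ideal.span {z₁, z₂}) ∧
    (∀ j : Fin k,
      z₂ * q₁ j - z₁ * q₂ j ∈ Ideal.span {z₁, z₂} ∧
      (z₂ * q₁ j - z₁ * q₂ j).IsHomogeneous 3) := by
  have hz₁ne : z₁ ≠ 0 := by simpa using hind.ne_zero 0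
  have hz₂ne : z₂ ≠ 0 := by simpa using hind.ne_zero 1
  have hprime : Prime z₁ := prime_of_homog_one hz₁ hz₁ne
  have hnd : ¬ z₁ ∣ z₂ := by
    rintro ⟨u, hu⟩
    have hune : u ≠ 0 := by rintro rfl; rw [mul_zero] at hu; exact hz₂ne hu
    have hle := totalDegree_add_le_mul hz₁ne hune
    rw [← hu, hz₂.totalDegree hz₂ne, hz₁.totalDegree hz₁ne] at hle
    have hu0 : u.totalDegree = 0 := by omega
    have huc : u = C (coeff 0 u) := eq_C_of_totalDegree_eq_zero hu0
    have hrel : (coeff 0 u) • z₁ + (-1 : ℂ) • z₂ = 0 := by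
      rw [MvPolynomial.smul_eq_C_mul, MvPolynomial.smul_eq_C_mul, hu, huc]
      simp only [coeff_zero_C, map_neg, map_one]
      ring
    have := (LinearIndependent.pair_iff.mp hind _ _ hrel).2
    norm_num at this
  refine ⟨?_, ?_, ?_⟩
  · intro a b
    constructor
    · intro h
      have hdvd : z₁ ∣ b * z₂ := ⟨-a, by linear_combination h⟩
      rcases (hprime.2.2 b z₂ hdvd) with hb | h2
      · obtain ⟨d, hd⟩ := hb
        have hz : z₁ * (a + d * z₂) = 0 := by rw [hd] at h; linear_combination h
        rcases mul_eq_zero.mp hz with h' | h'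
        · exact absurd h' hz₁ne
        · exact ⟨-d, by linear_combination h', by rw [hd]; ring⟩
      · exact absurd h2 hnd
    · rintro ⟨c, rfl, rfl⟩; ring
  · intro g
    rw [Ideal.mem_span_pair]
    constructor
    · rintro ⟨a, b, rfl⟩; exact ⟨a, b, rfl⟩
    · rintro ⟨a, b, rfl⟩; exact ⟨a, b, rfl⟩
  · intro j
    have h1 : z₁ ∈ Ideal.span ({z₁, z₂} : Set (MvPolynomial (Fin (n + 1)) ℂ)) :=
      Ideal.subset_span (by simp)
    have h2 : z₂ ∈ Ideal.span ({z₁, z₂} : Set (MvPolynomial (Fin (n + 1)) ℂ)) :=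
      Ideal.subset_span (by simp)
    exact ⟨sub_mem (Ideal.mul_mem_right _ _ h2) (Ideal.mul_mem_right _ _ h1),
      (hz₂.mul (hq₁ j)).sub (hz₁.mul (hq₂ j))⟩
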